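/- Approximate ridge kernel lemma: let K(M) = (M Mᵀ + (1/k)‖M−M_k‖_F² I)⁻¹. If C satisfies (1−ε) A Aᵀ − (ε/k)‖A−A_k‖_F² I ⪯ C Cᵀ ⪯ A Aᵀ and (1−αε)‖A−A_k‖_F² ≤ ‖C−C_k‖_F² ≤ ‖A−A_k‖_F² with 0 < ε < 1/2 and (α+1)ε < 1, then K(A) ⪯ K(C) ⪯ (1/(1−(α+1)ε)) K(A). -/

import Mathlib

open Matrix BigOperators Finset

noncomputable section

def frobSq {m n : Type*} [Fintype m] [Fintype n] (A : Matrix m n ℝ) : ℝ :=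
  ∑ i, ∑ j, (A i j) ^ 2

def loewnerLE {n : Type*} [Fintype n] (M N : Matrix n n ℝ) : Prop :=
  (N - M).PosSemidef

section Helpers

open scoped MatrixOrder

variable {n : Type*} [Fintype n] [DecidableEq n]

lemma psd_smul {M : Matrix n n ℝ} (hM : M.PosSemidef) {c : ℝ} (hc : 0 ≤ c) :
    (c • M).PosSemidef := by
  refine Matrix.posSemidef_iff_dotProduct_mulVec.mpr ⟨?_, ?_⟩
  · show (c • M)ᴴ = c • M
    rw [conjTranspose_smul, star_trivial, hM.1.eq]
  · intro x
    rw [Matrix.smul_mulVec, dotProduct_smul, smul_eq_mul]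
    exact mul_nonneg hc (hM.dotProduct_mulVec_nonneg x)

lemma pd_smul {M : Matrix n n ℝ} (hM : M.PosDef) {c : ℝ} (hc : 0 < c) :
    (c • M).PosDef := by
  refine Matrix.posDef_iff_dotProduct_mulVec.mpr ⟨?_, ?_⟩
  · show (c • M)ᴴ = c • M
    rw [conjTranspose_smul, star_trivial, hM.1.eq]
  · intro x hx
    rw [Matrix.smul_mulVec, dotProduct_smul, smul_eq_mul]
    exact mul_pos hc (hM.dotProduct_mulVec_pos hx)

lemma sqrt_pd {M : Matrix n n ℝ} (hM : M.PosDef) : (CFC.sqrt M).PosDef := by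
  set S := CFC.sqrt M with hSdef
  have hSpsd : S.PosSemidef := (CFC.sqrt_nonneg M).posSemidef
  have hdet : S.det ≠ 0 := by
    have h2 : S.det * S.det = M.det := by
      rw [← Matrix.det_mul, CFC.sqrt_mul_sqrt_self M hM.posSemidef.nonneg]
    intro h
    rw [h, zero_mul] at h2
    exact hM.det_pos.ne h2
  refine Matrix.PosDef.of_dotProduct_mulVec_pos hSpsd.1 fun x hx => ?_
  rcases (hSpsd.dotProduct_mulVec_nonneg x).lt_or_eq with h | h
  · exact h
  · exfalso
    have h0 : S *ᵥ x = 0 := (hSpsd.dotProduct_mulVec_zero_iff x).mp h.symm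
    apply hx
    have := congrArg (fun v => S⁻¹ *ᵥ v) h0
    simpa [Matrix.mulVec_mulVec, Matrix.nonsing_inv_mul S (isUnit_iff_ne_zero.mpr hdet)] using this

lemma conj_pd {A : Matrix n n ℝ} (hA : A.PosDef) {B : Matrix n n ℝ} (hB : IsUnit B.det) :
    (Bᴴ * A * B).PosDef := by
  refine Matrix.PosDef.of_dotProduct_mulVec_pos (Matrix.isHermitian_conjTranspose_mul_mul B hA.1) fun x hx => ?_
  have hBx : B *ᵥ x ≠ 0 := by
    intro h
    apply hx
    have := congrArg (fun v => B⁻¹ *ᵥ v) h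
    simpa [Matrix.mulVec_mulVec, Matrix.nonsing_inv_mul B hB] using this
  have := hA.dotProduct_mulVec_pos hBx
  simpa only [star_mulVec, dotProduct_mulVec, vecMul_vecMul] using this

lemma one_sub_inv {M : Matrix n n ℝ} (hM : M.PosDef) (h : ((1 : Matrix n n ℝ) - M).PosSemidef) :
    (M⁻¹ - 1).PosSemidef := by
  set S := CFC.sqrt M with hSdef
  have hS : S.PosDef := sqrt_pd hM
  have hSdet : IsUnit S.det := isUnit_iff_ne_zero.mpr hS.det_pos.ne'
  have hSS : S * S = M := CFC.sqrt_mul_sqrt_self M hM.posSemidef.nonneg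
  have hSiH : (S⁻¹)ᴴ = S⁻¹ := hS.1.inv
  have hconj := h.mul_mul_conjTranspose_same (B := S⁻¹)
  rw [hSiH] at hconj
  have e : S⁻¹ * (1 - M) * S⁻¹ = M⁻¹ - 1 := by
    rw [Matrix.mul_sub, Matrix.sub_mul, Matrix.mul_one]
    congr 1
    · rw [← hSS, Matrix.mul_inv_rev]
    · rw [← hSS, Matrix.mul_assoc, Matrix.mul_assoc, Matrix.mul_nonsing_inv S hSdet,
        Matrix.mul_one, Matrix.nonsing_inv_mul S hSdet]
  rwa [e] at hconj

lemma inv_antitone {P Q : Matrix n n ℝ} (hP : P.PosDef) (hQ : Q.PosDef)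
    (h : (Q - P).PosSemidef) : (P⁻¹ - Q⁻¹).PosSemidef := by
  set R := CFC.sqrt Q with hRdef
  have hR : R.PosDef := sqrt_pd hQ
  have hRdet : IsUnit R.det := isUnit_iff_ne_zero.mpr hR.det_pos.ne'
  have hRidet : IsUnit R⁻¹.det := R.isUnit_nonsing_inv_det hRdet
  have hRiH : (R⁻¹)ᴴ = R⁻¹ := hR.1.inv
  have hRR : R * R = Q := CFC.sqrt_mul_sqrt_self Q hQ.posSemidef.nonneg
  have hM : (R⁻¹ * P * R⁻¹).PosDef := by
    have := conj_pd hP (B := R⁻¹) hRidet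
    rwa [hRiH] at this
  have h1M : ((1 : Matrix n n ℝ) - R⁻¹ * P * R⁻¹).PosSemidef := by
    have hconj := h.mul_mul_conjTranspose_same (B := R⁻¹)
    rw [hRiH] at hconj
    have e : R⁻¹ * (Q - P) * R⁻¹ = 1 - R⁻¹ * P * R⁻¹ := by
      rw [Matrix.mul_sub, Matrix.sub_mul]
      congr 1
      rw [← hRR, Matrix.mul_assoc, Matrix.mul_assoc, Matrix.mul_nonsing_inv R hRdet,
        Matrix.mul_one, Matrix.nonsing_inv_mul R hRdet]
    rwa [e] at hconj
  have hkey := (one_sub_inv hM h1M).mul_mul_conjTranspose_same (B := R⁻¹)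
  rw [hRiH] at hkey
  have e2 : R⁻¹ * ((R⁻¹ * P * R⁻¹)⁻¹ - 1) * R⁻¹ = P⁻¹ - Q⁻¹ := by
    rw [Matrix.mul_sub, Matrix.sub_mul, Matrix.mul_one]
    congr 1
    · rw [Matrix.mul_inv_rev, Matrix.mul_inv_rev, Matrix.nonsing_inv_nonsing_inv R hRdet,
        ← Matrix.mul_assoc, ← Matrix.mul_assoc, Matrix.nonsing_inv_mul R hRdet,
        Matrix.one_mul, Matrix.mul_assoc, Matrix.mul_nonsing_inv R hRdet, Matrix.mul_one]
    · rw [← hRR, Matrix.mul_inv_rev]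
  rwa [e2] at hkey

lemma conjT_real {m p : Type*} (A : Matrix m p ℝ) : Aᴴ = Aᵀ := by
  ext i j
  simp [Matrix.conjTranspose_apply]

theorem drls_kernel_bound_aux {n dA dC k : ℕ} (hk : 1 ≤ k)
    (A Ak : Matrix (Fin n) (Fin dA) ℝ) (C Ck : Matrix (Fin n) (Fin dC) ℝ)
    (hApos : 0 < frobSq (A - Ak))
    (α ε : ℝ) (hα : 0 < α) (hε0 : 0 < ε) (hε1 : ε < 1 / 2) (hαε : (α + 1) * ε < 1)
    (hspecL : (C * Cᵀ -
      ((1 - ε) • (A * Aᵀ) - (ε * (1 / (k : ℝ) * frobSq (A - Ak))) • 1)).PosSemidef)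
    (hspecR : (A * Aᵀ - C * Cᵀ).PosSemidef)
    (htailL : (1 - α * ε) * frobSq (A - Ak) ≤ frobSq (C - Ck))
    (htailR : frobSq (C - Ck) ≤ frobSq (A - Ak)) :
    ((C * Cᵀ + (1 / (k : ℝ) * frobSq (C - Ck)) • 1)⁻¹ -
        (A * Aᵀ + (1 / (k : ℝ) * frobSq (A - Ak)) • 1)⁻¹).PosSemidef ∧
      ((1 / (1 - (α + 1) * ε)) • (A * Aᵀ + (1 / (k : ℝ) * frobSq (A - Ak)) • 1)⁻¹ -
        (C * Cᵀ + (1 / (k : ℝ) * frobSq (C - Ck)) • 1)⁻¹).PosSemidef := by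
  have hk' : (0:ℝ) < (k:ℝ) := by exact_mod_cast Nat.lt_of_lt_of_le Nat.zero_lt_one hk
  have hinvk : (0:ℝ) < 1 / (k:ℝ) := by positivity
  set lA := 1 / (k:ℝ) * frobSq (A - Ak) with hlA
  set lC := 1 / (k:ℝ) * frobSq (C - Ck) with hlC
  have hαε1 : α * ε < 1 := by nlinarith
  have hfC : 0 < frobSq (C - Ck) := lt_of_lt_of_le (by nlinarith) htailL
  have hlApos : 0 < lA := mul_pos hinvk hApos
  have hlCpos : 0 < lC := mul_pos hinvk hfC
  have hAAT : (A * Aᵀ).PosSemidef := by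
    have := Matrix.posSemidef_self_mul_conjTranspose A
    rwa [conjT_real] at this
  have hCCT : (C * Cᵀ).PosSemidef := by
    have := Matrix.posSemidef_self_mul_conjTranspose C
    rwa [conjT_real] at this
  set KA := A * Aᵀ + lA • (1 : Matrix (Fin n) (Fin n) ℝ) with hKA
  set KC := C * Cᵀ + lC • (1 : Matrix (Fin n) (Fin n) ℝ) with hKC
  have hKApd : KA.PosDef := Matrix.PosDef.posSemidef_add hAAT (pd_smul Matrix.PosDef.one hlApos)
  have hKCpd : KC.PosDef := Matrix.PosDef.posSemidef_add hCCT (pd_smul Matrix.PosDef.one hlCpos)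
  have hlCA : lC ≤ lA := by
    rw [hlA, hlC]
    exact mul_le_mul_of_nonneg_left htailR (le_of_lt hinvk)
  constructor
  · -- KC ⪯ KA, so KA⁻¹ ⪯ KC⁻¹
    apply inv_antitone hKCpd hKApd
    have e : KA - KC = (A * Aᵀ - C * Cᵀ) + (lA - lC) • (1 : Matrix (Fin n) (Fin n) ℝ) := by
      rw [hKA, hKC, sub_smul]
      abel
    rw [e]
    exact hspecR.add (psd_smul Matrix.PosSemidef.one (by linarith))
  · -- s•KA ⪯ KC
    set s := 1 - (α + 1) * ε with hs
    have hspos : 0 < s := by rw [hs]; linarith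
    have hsub : (KC - s • KA).PosSemidef := by
      have e : KC - s • KA =
          (C * Cᵀ - ((1 - ε) • (A * Aᵀ) - (ε * lA) • (1 : Matrix (Fin n) (Fin n) ℝ)))
          + (α * ε) • (A * Aᵀ) + (lC - (1 - α * ε) * lA) • (1 : Matrix (Fin n) (Fin n) ℝ) := by
        rw [hKC, hKA, hs]
        module
      rw [e]
      refine (Matrix.PosSemidef.add (Matrix.PosSemidef.add hspecL ?_) ?_)
      · exact psd_smul hAAT (by positivity)
      · refine psd_smul Matrix.PosSemidef.one ?_
        have : (1 - α * ε) * lA ≤ lC := by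
          rw [hlA, hlC, ← mul_assoc, mul_comm (1 - α * ε) (1 / (k:ℝ)), mul_assoc]
          exact mul_le_mul_of_nonneg_left htailL (le_of_lt hinvk)
        linarith
    have hsKA : (s • KA).PosDef := pd_smul hKApd hspos
    have h2 := inv_antitone hsKA hKCpd hsub
    have hKAdet : IsUnit KA.det := isUnit_iff_ne_zero.mpr hKApd.det_pos.ne'
    have einv : (s • KA)⁻¹ = (1 / s) • KA⁻¹ := by
      letI : Invertible s := invertibleOfNonzero hspos.ne'
      rw [Matrix.inv_smul (k := s) (h := hKAdet), invOf_eq_inv, one_div]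
    rwa [einv] at h2

end Helpers

/-- Approximate ridge kernel lemma: with `K(M) = (M Mᵀ + (1/k)‖M-M_k‖_F² I)⁻¹`, if `C`
satisfies the additive-multiplicative spectral bound and the tail-norm bound, with
`0 < ε < 1/2` and `(α+1)ε < 1`, then `K(A) ⪯ K(C) ⪯ (1/(1-(α+1)ε)) K(A)`. -/
theorem drls_kernel_bound {n dA dC k : ℕ} (hk : 1 ≤ k)
    (A Ak : Matrix (Fin n) (Fin dA) ℝ) (C Ck : Matrix (Fin n) (Fin dC) ℝ)
    (hrankA : k ≤ A.rank) (hrankC : k ≤ C.rank)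
    (hAk_rank : Ak.rank ≤ k)
    (hAk_opt : ∀ B : Matrix (Fin n) (Fin dA) ℝ, B.rank ≤ k →
      frobSq (A - Ak) ≤ frobSq (A - B))
    (hCk_rank : Ck.rank ≤ k)
    (hCk_opt : ∀ B : Matrix (Fin n) (Fin dC) ℝ, B.rank ≤ k →
      frobSq (C - Ck) ≤ frobSq (C - B))
    (hApos : 0 < frobSq (A - Ak))
    (α ε : ℝ) (hα : 0 < α) (hε0 : 0 < ε) (hε1 : ε < 1 / 2) (hαε : (α + 1) * ε < 1)
    (hspecL : loewnerLE
      ((1 - ε) • (A * Aᵀ) - (ε * (1 / (k : ℝ) * frobSq (A - Ak))) • 1) (C * Cᵀ))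
    (hspecR : loewnerLE (C * Cᵀ) (A * Aᵀ))
    (htailL : (1 - α * ε) * frobSq (A - Ak) ≤ frobSq (C - Ck))
    (htailR : frobSq (C - Ck) ≤ frobSq (A - Ak)) :
    loewnerLE ((A * Aᵀ + (1 / (k : ℝ) * frobSq (A - Ak)) • 1)⁻¹)
        ((C * Cᵀ + (1 / (k : ℝ) * frobSq (C - Ck)) • 1)⁻¹) ∧
      loewnerLE ((C * Cᵀ + (1 / (k : ℝ) * frobSq (C - Ck)) • 1)⁻¹)
        ((1 / (1 - (α + 1) * ε)) • (A * Aᵀ + (1 / (k : ℝ) * frobSq (A - Ak)) • 1)⁻¹) := by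
  refine ⟨drls_kernel_bound_aux hk A Ak C Ck hApos α ε hα hε0 hε1 hαε hspecL hspecR htailL htailR |>.1,
    drls_kernel_bound_aux hk A Ak C Ck hApos α ε hα hε0 hε1 hαε hspecL hspecR htailL htailR |>.2⟩
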